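/- Let O be an imaginary quadratic order (a ring of integers of an imaginary quadratic field), and consider the order Ō[i] in the quaternion algebra H = K̄[i] (where i^2 = -1 and αi = iᾱ for α in O). Then the reduced discriminant of Ō[i] equals the discriminant Δ of O. More precisely, the trace dual of Ō[i] with respect to the reduced trace is Ā[i], where A is the trace dual of O in K. -/

import Mathlib

open Matrix

/-- The quaternion-type matrix `[[u, -v̄],[v, ū]]`; the quaternion algebra `K̄[i]`
consists of all of these, and the order `Ō[i]` of those with `u, v` integral. -/
def qmat {K : Type*} [Field K] (σ : K → K) (u v : K) : Matrix (Fin 2) (Fin 2) K :=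
  !![u, -(σ v); v, σ u]

theorem qmat_mul_trace {K : Type*} [Field K] (σ : K → K) (u v a b : K) :
    (qmat σ u v * qmat σ a b).trace = u * a + σ u * σ a - (σ v * b + v * σ b) := by
  simp [qmat, Matrix.trace_fin_two, Matrix.mul_apply, Fin.sum_univ_two]
  ring

theorem aux_trace {K : Type*} [Field K] [NumberField K]
    (hdeg : Module.finrank ℚ K = 2)
    (σ : K ≃ₐ[ℚ] K) (hσne : σ ≠ (AlgEquiv.refl : K ≃ₐ[ℚ] K)) :
    ∀ x : K, algebraMap ℚ K (Algebra.trace ℚ K x) = x + σ x := by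
  classical
  have hcard : Fintype.card (K ≃ₐ[ℚ] K) = 2 := by
    refine le_antisymm ?_ ?_
    · calc Fintype.card (K ≃ₐ[ℚ] K) = Fintype.card (K →ₐ[ℚ] K) :=
            Fintype.card_congr (algEquivEquivAlgHom ℚ K).toEquiv
        _ ≤ Module.finrank K (K →ₗ[ℚ] K) := finrank_algHom ℚ K
        _ = Module.finrank ℚ K := Module.finrank_linearMap_self ℚ K K
        _ = 2 := hdeg
    · have : Nontrivial (K ≃ₐ[ℚ] K) := ⟨σ, AlgEquiv.refl, hσne⟩
      exact Fintype.one_lt_card_iff_nontrivial.mpr this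
  haveI : IsGalois ℚ K := IsGalois.of_card_aut_eq_finrank ℚ K (Nat.card_eq_fintype_card.trans (hcard.trans hdeg.symm))
  have huniv : (Finset.univ : Finset (K ≃ₐ[ℚ] K)) = {(AlgEquiv.refl : K ≃ₐ[ℚ] K), σ} := by
    symm
    apply Finset.eq_univ_of_card
    rw [hcard, Finset.card_insert_of_notMem (by simpa using hσne.symm), Finset.card_singleton]
  intro x
  rw [trace_eq_sum_automorphisms, huniv, Finset.sum_pair hσne.symm]
  rfl

theorem aux_discr {K : Type*} [Field K] [NumberField K]
    (hdeg : Module.finrank ℚ K = 2)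
    (σ : K ≃ₐ[ℚ] K)
    (htr : ∀ x : K, algebraMap ℚ K (Algebra.trace ℚ K x) = x + σ x)
    (ω : K) (hω : IsIntegral ℤ ω)
    (hbasis : ∀ x : K, IsIntegral ℤ x ↔ ∃ a b : ℤ, x = (a : K) + (b : K) * ω) :
    (NumberField.discr K : K) =
      2 * (ω * ω + σ ω * σ ω) - (ω + σ ω) * (ω + σ ω) := by
  classical
  open NumberField in
  set ωO : 𝓞 K := ⟨ω, hω⟩ with hωO
  have hωc : algebraMap (𝓞 K) K ωO = ω := rfl
  have hωQ : ∀ q : ℚ, ω ≠ algebraMap ℚ K q := by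
    intro q hq
    have hint : ∀ y : 𝓞 K, ∃ r : ℚ, (y : K) = algebraMap ℚ K r := by
      intro y
      obtain ⟨a, b, hy⟩ := (hbasis _).mp y.isIntegral_coe
      refine ⟨(a : ℚ) + (b : ℚ) * q, ?_⟩
      rw [show ((y : K)) = algebraMap (𝓞 K) K y from rfl, hy, hq, _root_.map_add,
        _root_.map_mul, _root_.map_intCast, _root_.map_intCast]
    have hsurj : ∀ x : K, ∃ r : ℚ, x = algebraMap ℚ K r := by
      intro x
      obtain ⟨a, b, -, rfl⟩ := IsFractionRing.div_surjective (A := 𝓞 K) x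
      obtain ⟨ra, ha⟩ := hint a
      obtain ⟨rb, hb⟩ := hint b
      refine ⟨ra / rb, ?_⟩
      rw [show (algebraMap (𝓞 K) K) a = (a : K) from rfl,
        show (algebraMap (𝓞 K) K) b = (b : K) from rfl, ha, hb, map_div₀]
    have hbot : (⊥ : Subalgebra ℚ K) = ⊤ := by
      rw [eq_top_iff]
      intro x _
      obtain ⟨r, rfl⟩ := hsurj x
      exact ⟨r, rfl⟩
    rw [Subalgebra.bot_eq_top_iff_finrank_eq_one, hdeg] at hbot
    exact absurd hbot (by norm_num)
  have hli : LinearIndependent ℤ ![(1 : 𝓞 K), ωO] := by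
    rw [LinearIndependent.pair_iff]
    intro s t hst
    have hK : (s : K) + (t : K) * ω = 0 := by
      have h0 := congrArg (algebraMap (𝓞 K) K) hst
      rw [_root_.map_add, map_zsmul, map_zsmul, _root_.map_one, _root_.map_zero, hωc,
        zsmul_eq_mul, zsmul_eq_mul, mul_one] at h0
      exact_mod_cast h0
    have ht : t = 0 := by
      by_contra h
      apply hωQ (-(s : ℚ) / (t : ℚ))
      have htK : (t : K) ≠ 0 := by exact_mod_cast h
      rw [map_div₀, map_neg, _root_.map_intCast, _root_.map_intCast, eq_div_iff htK]
      linear_combination hK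
    subst ht
    have hs : (s : K) = 0 := by linear_combination hK
    exact ⟨by exact_mod_cast hs, rfl⟩
  have hsp : ⊤ ≤ Submodule.span ℤ (Set.range ![(1 : 𝓞 K), ωO]) := by
    rintro x -
    obtain ⟨a, b, hx⟩ := (hbasis _).mp x.isIntegral_coe
    have hco : algebraMap (𝓞 K) K (a • (1 : 𝓞 K) + b • ωO) = (a : K) + (b : K) * ω := by
      rw [_root_.map_add, map_zsmul, map_zsmul, _root_.map_one, hωc, zsmul_eq_mul,
        zsmul_eq_mul, mul_one]
    have hx' : x = a • (1 : 𝓞 K) + b • ωO := by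
      apply Subtype.ext
      exact hx.trans hco.symm
    rw [hx']
    exact Submodule.add_mem _
      (Submodule.smul_mem _ _ (Submodule.subset_span ⟨0, rfl⟩))
      (Submodule.smul_mem _ _ (Submodule.subset_span ⟨1, rfl⟩))
  let b : Module.Basis (Fin 2) ℤ (𝓞 K) := Module.Basis.mk hli hsp
  have hdisc : Algebra.discr ℤ (⇑b) = discr K := NumberField.discr_eq_discr K b
  rw [Algebra.discr_def, Matrix.det_fin_two] at hdisc
  have hbc : ⇑b = ![(1 : 𝓞 K), ωO] := Module.Basis.coe_mk _ _
  have hcoe : ∀ x : 𝓞 K, ((Algebra.trace ℤ (𝓞 K) x : ℤ) : K) = (x : K) + σ (x : K) := by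
    intro x
    have h1 : ((Algebra.trace ℤ (𝓞 K) x : ℤ) : K) =
        algebraMap ℚ K ((Algebra.trace ℤ (𝓞 K) x : ℤ) : ℚ) := by
      rw [_root_.map_intCast]
    rw [h1, Algebra.coe_trace_int, htr]
  have hthis := congrArg (fun n : ℤ => (n : K)) hdisc
  simp only [Int.cast_sub, Int.cast_mul] at hthis
  rw [hbc] at hthis
  simp only [Algebra.traceMatrix_apply, Algebra.traceForm_apply] at hthis
  rw [← hthis]
  have e00 : (![(1 : 𝓞 K), ωO] 0 * ![(1 : 𝓞 K), ωO] 0) = 1 := by simp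
  have e01 : (![(1 : 𝓞 K), ωO] 0 * ![(1 : 𝓞 K), ωO] 1) = ωO := by simp
  have e10 : (![(1 : 𝓞 K), ωO] 1 * ![(1 : 𝓞 K), ωO] 0) = ωO := by simp
  have e11 : (![(1 : 𝓞 K), ωO] 1 * ![(1 : 𝓞 K), ωO] 1) = ωO * ωO := by simp
  rw [e00, e01, e10, e11, hcoe, hcoe, hcoe]
  have hω1 : ((1 : 𝓞 K) : K) = 1 := rfl
  have hωω : ((ωO * ωO : 𝓞 K) : K) = ω * ω := rfl
  rw [hω1, hωω, show ((ωO : 𝓞 K) : K) = ω from rfl]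
  simp only [_root_.map_one, _root_.map_mul]
  ring

set_option maxHeartbeats 1000000 in
/- STATEMENT 8.  Let `O` be the ring of integers (with ℤ-basis `1, ω`) of an imaginary
quadratic field `K` of discriminant `Δ`, with conjugation `σ`, and consider the order
`Ō[i] = {[[u,-v̄],[v,ū]] : u, v ∈ O}` in the quaternion algebra `K̄[i] ⊆ M₂(K)`.  Then:
(1) the trace dual of `Ō[i]` with respect to the reduced trace (= matrix trace) is
`Ā[i]`, where `A = {u : K : Tr_{K/ℚ}(uO) ⊆ ℤ}` is the trace dual of `O`; and
(2) the reduced discriminant of `Ō[i]` equals `Δ`: concretely, the Gram determinant of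
the reduced-trace form on the ℤ-basis `1, ω̄, i, iω̄` of `Ō[i]` is `-Δ²`. -/
theorem stmt8 (K : Type*) [Field K] [NumberField K]
    (hdeg : Module.finrank ℚ K = 2) (himag : IsEmpty (K →+* ℝ))
    (σ : K ≃ₐ[ℚ] K) (hσ : ∀ x, σ (σ x) = x) (hσne : σ ≠ (AlgEquiv.refl : K ≃ₐ[ℚ] K))
    (ω : K) (hω : IsIntegral ℤ ω)
    (hbasis : ∀ x : K, IsIntegral ℤ x ↔ ∃ a b : ℤ, x = (a : K) + (b : K) * ω) :
    (∀ u v : K,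
      ((∀ a b : K, IsIntegral ℤ a → IsIntegral ℤ b →
          ∃ n : ℤ, (qmat (⇑σ) u v * qmat (⇑σ) a b).trace = (n : K)) ↔
        ((∀ w : K, IsIntegral ℤ w → ∃ n : ℤ, u * w + σ (u * w) = (n : K)) ∧
         (∀ w : K, IsIntegral ℤ w → ∃ n : ℤ, v * w + σ (v * w) = (n : K))))) ∧
    Matrix.det (Matrix.of fun i j : Fin 4 =>
        (![qmat (⇑σ) 1 0, qmat (⇑σ) ω 0, qmat (⇑σ) 0 1, qmat (⇑σ) 0 ω] i *
         ![qmat (⇑σ) 1 0, qmat (⇑σ) ω 0, qmat (⇑σ) 0 1, qmat (⇑σ) 0 ω] j).trace)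
      = -((NumberField.discr K : K)) ^ 2 := by
  have hσint : ∀ w : K, IsIntegral ℤ w → IsIntegral ℤ (σ w) := by
    intro w hw
    exact hw.map σ.toAlgHom.toRingHom.toIntAlgHom
  constructor
  · intro u v
    constructor
    · intro H
      constructor
      · intro w hw
        obtain ⟨n, hn⟩ := H w 0 hw isIntegral_zero
        refine ⟨n, ?_⟩
        rw [qmat_mul_trace] at hn
        simp only [_root_.map_zero, mul_zero, zero_mul, add_zero, sub_zero] at hn
        rw [_root_.map_mul]
        linear_combination hn
      · intro w hw
        obtain ⟨n, hn⟩ := H 0 (σ w) isIntegral_zero (hσint w hw)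
        refine ⟨-n, ?_⟩
        rw [qmat_mul_trace] at hn
        simp only [_root_.map_zero, mul_zero, zero_mul, zero_add, hσ] at hn
        rw [_root_.map_mul]
        push_cast
        linear_combination -hn
    · rintro ⟨h1, h2⟩ a b ha hb
      obtain ⟨n1, hn1⟩ := h1 a ha
      obtain ⟨n2, hn2⟩ := h2 (σ b) (hσint b hb)
      refine ⟨n1 - n2, ?_⟩
      rw [qmat_mul_trace]
      simp only [_root_.map_mul, hσ] at hn1 hn2
      push_cast
      linear_combination hn1 - hn2
  · have hD := aux_discr hdeg σ (aux_trace hdeg σ hσne) ω hω hbasis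
    have hM : (Matrix.of fun i j : Fin 4 =>
        (![qmat (⇑σ) 1 0, qmat (⇑σ) ω 0, qmat (⇑σ) 0 1, qmat (⇑σ) 0 ω] i *
         ![qmat (⇑σ) 1 0, qmat (⇑σ) ω 0, qmat (⇑σ) 0 1, qmat (⇑σ) 0 ω] j).trace) =
        !![2, ω + σ ω, 0, 0; ω + σ ω, ω * ω + σ ω * σ ω, 0, 0;
           0, 0, -2, -(ω + σ ω); 0, 0, -(ω + σ ω), -(2 * (ω * σ ω))] := by
      ext i j
      fin_cases i <;> fin_cases j <;>
        simp [qmat_mul_trace, _root_.map_zero, _root_.map_one, Matrix.vecHead,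
          Matrix.vecTail] <;> ring
    rw [hM]
    rw [hD]
    simp [Matrix.det_succ_row_zero, Fin.sum_univ_succ,
      show Fin.succAbove (1 : Fin 4) (2 : Fin 3) = 3 by decide]
    ring
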